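/- Let X be the basis of a k-maximal submonoid of Σ*. Then X is a bifix code: for all distinct x, y ∈ X, the word x is neither a prefix nor a suffix of y. -/

import Mathlib

/-- The basis of a submonoid `M` of the free monoid `Σ*`: `(M \ {ε}) \ (M \ {ε})²`. -/
def basisOf {α : Type*} (M : Submonoid (FreeMonoid α)) : Set (FreeMonoid α) :=
  ((M : Set (FreeMonoid α)) \ {1}) \
    {w | ∃ u ∈ (M : Set (FreeMonoid α)) \ {1}, ∃ v ∈ (M : Set (FreeMonoid α)) \ {1}, w = u * v}

/-- A submonoid of `Σ*` is `k`-maximal if its rank (cardinality of its basis) is at most `k`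
and it is maximal (w.r.t. inclusion) among submonoids of rank at most `k`. -/
def IsKMaximal {α : Type*} (k : ℕ) (M : Submonoid (FreeMonoid α)) : Prop :=
  (basisOf M).Finite ∧ (basisOf M).ncard ≤ k ∧
    ∀ M' : Submonoid (FreeMonoid α),
      (basisOf M').Finite → (basisOf M').ncard ≤ k → M ≤ M' → M = M'

lemma mem_closure_basis {α : Type*} (M : Submonoid (FreeMonoid α)) :
    ∀ n (m : FreeMonoid α), m.length ≤ n → m ∈ M →
      m ∈ Submonoid.closure (basisOf M) := by
  intro n
  induction n with
  | zero =>
    intro m hl hm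
    have : m = 1 := FreeMonoid.length_eq_zero.mp (Nat.le_zero.mp hl)
    rw [this]; exact one_mem _
  | succ n ih =>
    intro m hl hm
    by_cases h1 : m = 1
    · rw [h1]; exact one_mem _
    by_cases hb : m ∈ basisOf M
    · exact Submonoid.subset_closure hb
    · have hsq : ∃ u ∈ (M : Set (FreeMonoid α)) \ {1},
          ∃ v ∈ (M : Set (FreeMonoid α)) \ {1}, m = u * v := by
        by_contra hc
        exact hb ⟨⟨hm, h1⟩, hc⟩
      obtain ⟨u, ⟨hu, hu1⟩, v, ⟨hv, hv1⟩, rfl⟩ := hsq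
      have hul : 1 ≤ u.length := Nat.pos_of_ne_zero (fun h => hu1 (FreeMonoid.length_eq_zero.mp h))
      have hvl : 1 ≤ v.length := Nat.pos_of_ne_zero (fun h => hv1 (FreeMonoid.length_eq_zero.mp h))
      rw [FreeMonoid.length_mul] at hl
      exact mul_mem (ih u (by omega) hu) (ih v (by omega) hv)

lemma prod_mem_aux {α : Type*} (S : Set (FreeMonoid α)) :
    ∀ l : List (FreeMonoid α), (∀ y ∈ l, y ∈ S) → l.prod ≠ 1 →
      (¬ ∃ u ∈ (Submonoid.closure S : Set (FreeMonoid α)) \ {1},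
        ∃ v ∈ (Submonoid.closure S : Set (FreeMonoid α)) \ {1}, l.prod = u * v) →
      l.prod ∈ S := by
  intro l
  induction l with
  | nil => intro _ h1 _; exact absurd rfl h1
  | cons a t iht =>
    intro hl h1 hsq
    rw [List.prod_cons] at h1 hsq ⊢
    by_cases ha1 : a = 1
    · subst ha1
      rw [one_mul] at h1 hsq ⊢
      exact iht (fun y hy => hl y (List.mem_cons_of_mem _ hy)) h1 hsq
    · by_cases ht1 : t.prod = 1
      · rw [ht1, mul_one]
        exact hl a (List.mem_cons_self)
      · exfalso
        exact hsq ⟨a, ⟨Submonoid.subset_closure (hl a (List.mem_cons_self)), ha1⟩,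
          t.prod, ⟨list_prod_mem (fun y hy => Submonoid.subset_closure
            (hl y (List.mem_cons_of_mem _ hy))), ht1⟩, rfl⟩

lemma basis_closure_subset {α : Type*} (S : Set (FreeMonoid α)) :
    basisOf (Submonoid.closure S) ⊆ S := by
  intro w hw
  obtain ⟨⟨hwM, hw1⟩, hwsq⟩ := hw
  obtain ⟨l, hl, hprod⟩ := Submonoid.exists_list_of_mem_closure hwM
  subst hprod
  exact prod_mem_aux S l hl hw1 hwsq

/-- The basis of a `k`-maximal submonoid is a bifix code: no element is a prefix
or a suffix of another element. -/
theorem basis_of_kMaximal_is_bifix {α : Type*} (k : ℕ) (M : Submonoid (FreeMonoid α))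
    (hmax : IsKMaximal k M) :
    ∀ x ∈ basisOf M, ∀ y ∈ basisOf M, x ≠ y →
      (¬ ∃ z : FreeMonoid α, y = x * z) ∧ (¬ ∃ z : FreeMonoid α, y = z * x) := by
  obtain ⟨hfin, hcard, hmax'⟩ := hmax
  intro x hx y hy hxy
  have hx1 : x ≠ 1 := hx.1.2
  have key : ∀ z : FreeMonoid α, z ≠ 1 → ((y = x * z) ∨ (y = z * x)) → False := by
    intro z hz1 hyz
    set S : Set (FreeMonoid α) := insert z (basisOf M \ {y}) with hS
    set M' := Submonoid.closure S with hM'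
    have hzS : z ∈ S := Set.mem_insert _ _
    have hxS : x ∈ S := Set.mem_insert_of_mem _ ⟨hx, hxy⟩
    have hBM' : basisOf M ⊆ (M' : Set (FreeMonoid α)) := by
      intro s hs
      by_cases h : s = y
      · subst h
        rcases hyz with h | h <;> rw [h]
        · exact mul_mem (Submonoid.subset_closure hxS) (Submonoid.subset_closure hzS)
        · exact mul_mem (Submonoid.subset_closure hzS) (Submonoid.subset_closure hxS)
      · exact Submonoid.subset_closure (Set.mem_insert_of_mem _ ⟨hs, h⟩)
    have hMM' : M ≤ M' := by
      intro m hm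
      exact Submonoid.closure_le.mpr hBM' (mem_closure_basis M m.length m le_rfl hm)
    have hSfin : S.Finite := Set.Finite.insert _ hfin.diff
    have hB'sub : basisOf M' ⊆ S := basis_closure_subset S
    have hB'fin : (basisOf M').Finite := hSfin.subset hB'sub
    have hB'card : (basisOf M').ncard ≤ k := by
      have h1 : (basisOf M').ncard ≤ S.ncard := Set.ncard_le_ncard hB'sub hSfin
      have h2 : S.ncard ≤ (basisOf M \ {y}).ncard + 1 := Set.ncard_insert_le _ _
      have h3 : (basisOf M \ {y}).ncard = (basisOf M).ncard - 1 :=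
        Set.ncard_diff_singleton_of_mem hy
      have h4 : 0 < (basisOf M).ncard := (Set.ncard_pos hfin).mpr ⟨y, hy⟩
      omega
    have hMeq : M = M' := hmax' M' hB'fin hB'card hMM'
    have hzM : z ∈ M := by rw [hMeq]; exact Submonoid.subset_closure hzS
    apply hy.2
    rcases hyz with h | h
    · exact ⟨x, ⟨hx.1.1, hx1⟩, z, ⟨hzM, hz1⟩, h⟩
    · exact ⟨z, ⟨hzM, hz1⟩, x, ⟨hx.1.1, hx1⟩, h⟩
  constructor
  · rintro ⟨z, hz⟩
    have hz1 : z ≠ 1 := by rintro rfl; rw [mul_one] at hz; exact hxy hz.symm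
    exact key z hz1 (Or.inl hz)
  · rintro ⟨z, hz⟩
    have hz1 : z ≠ 1 := by rintro rfl; rw [one_mul] at hz; exact hxy hz.symm
    exact key z hz1 (Or.inr hz)
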